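/- For a commutative Hopf algebroid H over A, the set Brt(H, A) of local biretractions with the convolution product (α∗β)(h) = β(t(α(h_(1)))) β(h_(2)) is a regular monoid: the product is associative, the counit ε is a two-sided unit, and every α has a pseudo-inverse α* = (α∘t)^{-1} ∘ α ∘ S satisfying α ∗ α* ∗ α = α and α* ∗ α ∗ α* = α*. -/
import Mathlib


open TensorProduct

/-- The unital ideal `A·e` generated by an element `e` of a commutative ring. -/
def idealOf {A : Type*} [CommRing A] (e : A) : Set A := Set.range (fun a => a * e)

/-- A commutative Hopf algebroid over a commutative base algebra `A`:
a commutative algebra `H` with source and target maps `s, t : A → H`,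
comultiplication `Δ`, counit `ε` and antipode `S` satisfying the standard axioms
(`S∘t = s`, `S∘s = t`, `S(h₍₁₎)h₍₂₎ = s(ε h)`, `h₍₁₎S(h₍₂₎) = t(ε h)`, etc.). -/
structure CommHopfAlgebroid (k A H : Type*) [CommRing k] [CommRing A] [CommRing H]
    [Algebra k A] [Algebra k H] where
  s : A →ₐ[k] H
  t : A →ₐ[k] H
  comul : H →ₐ[k] H ⊗[k] H
  counit : H →ₐ[k] A
  antipode : H →ₐ[k] H
  coassoc :
    (TensorProduct.assoc k H H H).toLinearMap ∘ₗ
      (TensorProduct.map comul.toLinearMap LinearMap.id) ∘ₗ comul.toLinearMap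
    = (TensorProduct.map LinearMap.id comul.toLinearMap) ∘ₗ comul.toLinearMap
  counit_left : (LinearMap.mul' k H) ∘ₗ
      (TensorProduct.map (t.toLinearMap ∘ₗ counit.toLinearMap) LinearMap.id) ∘ₗ
        comul.toLinearMap = LinearMap.id
  counit_right : (LinearMap.mul' k H) ∘ₗ
      (TensorProduct.map LinearMap.id (s.toLinearMap ∘ₗ counit.toLinearMap)) ∘ₗ
        comul.toLinearMap = LinearMap.id
  counit_s : ∀ a : A, counit (s a) = a
  counit_t : ∀ a : A, counit (t a) = a
  antipode_s : ∀ a : A, antipode (s a) = t a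
  antipode_t : ∀ a : A, antipode (t a) = s a
  comul_t : ∀ a : A, comul (t a) = t a ⊗ₜ[k] 1
  comul_s : ∀ a : A, comul (s a) = 1 ⊗ₜ[k] s a
  antipode_left : (LinearMap.mul' k H) ∘ₗ
      (TensorProduct.map antipode.toLinearMap LinearMap.id) ∘ₗ comul.toLinearMap
    = s.toLinearMap ∘ₗ counit.toLinearMap
  antipode_right : (LinearMap.mul' k H) ∘ₗ
      (TensorProduct.map LinearMap.id antipode.toLinearMap) ∘ₗ comul.toLinearMap
    = t.toLinearMap ∘ₗ counit.toLinearMap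

variable {k A H : Type*} [CommRing k] [CommRing A] [CommRing H] [Algebra k A] [Algebra k H]

/-- The convolution product of right `A`-linear maps `H → A`:
`(α ∗ β)(h) = β(t(α(h₍₁₎)) · h₍₂₎) = β(t(α(h₍₁₎))) · β(h₍₂₎)`. -/
noncomputable def brtConv (D : CommHopfAlgebroid k A H) (α β : H →ₗ[k] A) : H →ₗ[k] A :=
  β ∘ₗ (LinearMap.mul' k H) ∘ₗ
    (TensorProduct.map (D.t.toLinearMap ∘ₗ α) LinearMap.id) ∘ₗ D.comul.toLinearMap

/-- `e` is a witness for axiom (BRT2) of a local biretraction `α`: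
`α(t(e)) = α(1)` and `α∘t` restricts to a bijection `A·e → A·α(1)`. -/
def IsBrtWitness (D : CommHopfAlgebroid k A H) (α : H →ₗ[k] A) (e : A) : Prop :=
  α (D.t e) = α 1 ∧ Set.BijOn (fun a => α (D.t a)) (idealOf e) (idealOf (α 1))

/-- A local biretraction of a commutative Hopf algebroid: a linear multiplicative
map `α : H → A` satisfying (BRT1) `α(s(a)) = a·α(1)` and (BRT2). -/
def IsBiretraction (D : CommHopfAlgebroid k A H) (α : H →ₗ[k] A) : Prop :=
  (∀ x y : H, α (x * y) = α x * α y) ∧ (∀ a : A, α (D.s a) = a * α 1) ∧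
    ∃ e : A, IsBrtWitness D α e
namespace BrtAux

set_option maxHeartbeats 1000000
set_option synthInstance.maxHeartbeats 200000

variable {k A H : Type*} [CommRing k] [CommRing A] [CommRing H] [Algebra k A] [Algebra k H]
variable (D : CommHopfAlgebroid k A H)

lemma mem_idealOf {e x : A} : x ∈ idealOf e ↔ ∃ a, a * e = x := Iff.rfl

lemma self_mem_idealOf (e : A) : e ∈ idealOf e := ⟨1, one_mul e⟩

lemma mul_mem_idealOf {e x : A} (a : A) (hx : x ∈ idealOf e) : a * x ∈ idealOf e := by
  obtain ⟨b, rfl⟩ := hx; exact ⟨a * b, (mul_assoc a b e)⟩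

/-- The map `w ↦ t(α(w₁))·w₂` on `H ⊗ H`. -/
noncomputable def psi (α : H →ₗ[k] A) : H ⊗[k] H →ₗ[k] H :=
  (LinearMap.mul' k H) ∘ₗ (TensorProduct.map (D.t.toLinearMap ∘ₗ α) LinearMap.id)

/-- The map `h ↦ t(α(h₍₁₎))·h₍₂₎`. -/
noncomputable def Phi (α : H →ₗ[k] A) : H →ₗ[k] H := psi D α ∘ₗ D.comul.toLinearMap

lemma brtConv_def (α β : H →ₗ[k] A) : brtConv D α β = β ∘ₗ Phi D α := rfl

lemma conv_apply (α β : H →ₗ[k] A) (h : H) : brtConv D α β h = β (Phi D α h) := rfl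

lemma psi_tmul (α : H →ₗ[k] A) (x y : H) : psi D α (x ⊗ₜ[k] y) = D.t (α x) * y := by
  simp [psi]

lemma Phi_apply (α : H →ₗ[k] A) (h : H) : Phi D α h = psi D α (D.comul h) := rfl

lemma psi_mul (α : H →ₗ[k] A) (hα : ∀ x y : H, α (x * y) = α x * α y)
    (w₁ w₂ : H ⊗[k] H) : psi D α (w₁ * w₂) = psi D α w₁ * psi D α w₂ := by
  induction w₁ using TensorProduct.induction_on with
  | zero => simp
  | tmul x y =>
    induction w₂ using TensorProduct.induction_on with
    | zero => simp
    | tmul p q =>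
      simp only [Algebra.TensorProduct.tmul_mul_tmul, psi_tmul, hα, map_mul]
      ring
    | add w₁ w₂ h1 h2 => simp only [mul_add, map_add, h1, h2]
  | add w₁ w₂ h1 h2 => simp only [add_mul, map_add, h1, h2]

lemma Phi_mul (α : H →ₗ[k] A) (hα : ∀ x y : H, α (x * y) = α x * α y)
    (x y : H) : Phi D α (x * y) = Phi D α x * Phi D α y := by
  simp only [Phi_apply, AlgHom.toLinearMap_apply]
  rw [map_mul D.comul x y, psi_mul D α hα]

lemma Phi_t (α : H →ₗ[k] A) (a : A) : Phi D α (D.t a) = D.t (α (D.t a)) := by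
  rw [Phi_apply, show D.comul (D.t a) = D.t a ⊗ₜ[k] (1:H) from D.comul_t a,
    psi_tmul, mul_one]

lemma Phi_one (α : H →ₗ[k] A) : Phi D α 1 = D.t (α 1) := by
  rw [Phi_apply, show D.comul (1:H) = (1:H) ⊗ₜ[k] (1:H) by
    rw [map_one]; rfl, psi_tmul, mul_one]

lemma Phi_s (α : H →ₗ[k] A) (a : A) : Phi D α (D.s a) = D.t (α 1) * D.s a := by
  rw [Phi_apply, show D.comul (D.s a) = (1:H) ⊗ₜ[k] D.s a from D.comul_s a,
    psi_tmul]

lemma comul_psi (α : H →ₗ[k] A) (w : H ⊗[k] H) :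
    D.comul.toLinearMap (psi D α w)
      = (TensorProduct.map (LinearMap.mul' k H) LinearMap.id)
          ((TensorProduct.map (TensorProduct.map (D.t.toLinearMap ∘ₗ α) LinearMap.id)
              LinearMap.id)
            ((TensorProduct.assoc k H H H).symm
              ((TensorProduct.map LinearMap.id D.comul.toLinearMap) w))) := by
  induction w using TensorProduct.induction_on with
  | zero => simp
  | tmul x y =>
    have h1 : (TensorProduct.map LinearMap.id D.comul.toLinearMap) (x ⊗ₜ[k] y)
        = x ⊗ₜ[k] D.comul y := by simp
    rw [h1, psi_tmul,
      show D.comul.toLinearMap (D.t (α x) * y) = D.comul (D.t (α x)) * D.comul y from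
        map_mul D.comul _ _, D.comul_t]
    induction D.comul y using TensorProduct.induction_on with
    | zero => simp
    | tmul p q =>
      simp [Algebra.TensorProduct.tmul_mul_tmul]
    | add w₁ w₂ h1 h2 =>
      simp only [mul_add, tmul_add, map_add, h1, h2]
  | add w₁ w₂ h1 h2 => simp only [map_add, h1, h2]

lemma Phi_conv (α β : H →ₗ[k] A) : Phi D (brtConv D α β) = Phi D β ∘ₗ Phi D α := by
  ext h
  have coas : (TensorProduct.map LinearMap.id D.comul.toLinearMap)
      (D.comul.toLinearMap h)
      = (TensorProduct.assoc k H H H)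
          ((TensorProduct.map D.comul.toLinearMap LinearMap.id)
            (D.comul.toLinearMap h)) := by
    have := LinearMap.congr_fun D.coassoc h
    simpa [LinearMap.comp_apply] using this.symm
  have key : ∀ w : H ⊗[k] H,
      psi D β ((TensorProduct.map (LinearMap.mul' k H) LinearMap.id)
        ((TensorProduct.map (TensorProduct.map (D.t.toLinearMap ∘ₗ α) LinearMap.id)
            LinearMap.id)
          ((TensorProduct.map D.comul.toLinearMap LinearMap.id) w)))
      = psi D (brtConv D α β) w := by
    intro w
    induction w using TensorProduct.induction_on with
    | zero => simp
    | tmul x y =>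
      simp only [TensorProduct.map_tmul, LinearMap.id_apply, psi_tmul]
      congr 2
    | add w₁ w₂ h1 h2 => simp only [map_add, h1, h2]
  calc Phi D (brtConv D α β) h
      = psi D (brtConv D α β) (D.comul.toLinearMap h) := rfl
    _ = psi D β ((TensorProduct.map (LinearMap.mul' k H) LinearMap.id)
        ((TensorProduct.map (TensorProduct.map (D.t.toLinearMap ∘ₗ α) LinearMap.id)
            LinearMap.id)
          ((TensorProduct.map D.comul.toLinearMap LinearMap.id)
            (D.comul.toLinearMap h)))) := (key _).symm
    _ = psi D β ((TensorProduct.map (LinearMap.mul' k H) LinearMap.id)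
        ((TensorProduct.map (TensorProduct.map (D.t.toLinearMap ∘ₗ α) LinearMap.id)
            LinearMap.id)
          ((TensorProduct.assoc k H H H).symm
            ((TensorProduct.map LinearMap.id D.comul.toLinearMap)
              (D.comul.toLinearMap h))))) := by
        rw [coas, LinearEquiv.symm_apply_apply]
    _ = psi D β (D.comul.toLinearMap (psi D α (D.comul.toLinearMap h))) :=
        (congrArg (psi D β) (comul_psi D α _)).symm
    _ = (Phi D β ∘ₗ Phi D α) h := rfl

lemma conv_assoc (α β γ : H →ₗ[k] A) :
    brtConv D (brtConv D α β) γ = brtConv D α (brtConv D β γ) := by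
  rw [brtConv_def, Phi_conv]
  rfl

end BrtAux
namespace BrtAux

variable {k A H : Type*} [CommRing k] [CommRing A] [CommRing H] [Algebra k A] [Algebra k H]
variable (D : CommHopfAlgebroid k A H)

lemma counit_conv (α : H →ₗ[k] A) : brtConv D D.counit.toLinearMap α = α := by
  unfold brtConv
  rw [D.counit_left, LinearMap.comp_id]

lemma conv_eq_of_t_eq (β' δ : H →ₗ[k] A)
    (hkey : (δ ∘ₗ psi D β' : H ⊗[k] H →ₗ[k] A) = δ ∘ₗ psi D D.counit.toLinearMap) :
    brtConv D β' δ = δ := by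
  ext h
  have h2 := LinearMap.congr_fun D.counit_left h
  simp only [LinearMap.comp_apply, LinearMap.id_apply] at h2
  have h1 := LinearMap.congr_fun hkey (D.comul.toLinearMap h)
  simp only [LinearMap.comp_apply] at h1
  calc brtConv D β' δ h = δ (psi D β' (D.comul.toLinearMap h)) := rfl
    _ = δ (psi D D.counit.toLinearMap (D.comul.toLinearMap h)) := h1
    _ = δ h := congrArg δ h2

lemma conv_counit (α : H →ₗ[k] A) (hm : ∀ x y : H, α (x * y) = α x * α y)
    (hs : ∀ a : A, α (D.s a) = a * α 1) : brtConv D α D.counit.toLinearMap = α := by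
  have habs : ∀ z : H, α z * α 1 = α z := fun z => by rw [← hm, mul_one]
  have key : (D.counit.toLinearMap ∘ₗ psi D α : H ⊗[k] H →ₗ[k] A)
      = α ∘ₗ (LinearMap.mul' k H) ∘ₗ
          TensorProduct.map LinearMap.id (D.s.toLinearMap ∘ₗ D.counit.toLinearMap) := by
    apply TensorProduct.ext'
    intro x y
    simp only [LinearMap.comp_apply, psi_tmul, TensorProduct.map_tmul,
      LinearMap.mul'_apply, LinearMap.id_apply, AlgHom.toLinearMap_apply]
    rw [map_mul D.counit, D.counit_t, hm, hs, mul_comm (D.counit y) (α 1),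
      ← mul_assoc, habs]
  ext h
  have h1 := LinearMap.congr_fun key (D.comul.toLinearMap h)
  simp only [LinearMap.comp_apply] at h1
  have h2 := LinearMap.congr_fun D.counit_right h
  simp only [LinearMap.comp_apply, LinearMap.id_apply] at h2
  calc brtConv D α D.counit.toLinearMap h
      = D.counit.toLinearMap (psi D α (D.comul.toLinearMap h)) := rfl
    _ = α ((LinearMap.mul' k H)
        ((TensorProduct.map LinearMap.id (D.s.toLinearMap ∘ₗ D.counit.toLinearMap))
          (D.comul.toLinearMap h))) := h1
    _ = α h := congrArg α h2

lemma counit_biretraction : IsBiretraction D D.counit.toLinearMap := by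
  refine ⟨fun x y => ?_, fun a => ?_, 1, ?_, ?_⟩
  · simp only [AlgHom.toLinearMap_apply, map_mul]
  · simp only [AlgHom.toLinearMap_apply, D.counit_s, map_one, mul_one]
  · simp only [AlgHom.toLinearMap_apply, map_one]
  · have h1 : D.counit.toLinearMap 1 = 1 := map_one D.counit
    rw [h1]
    have heq : Set.EqOn id (fun a => D.counit.toLinearMap (D.t a)) (idealOf (1:A)) :=
      fun a _ => (D.counit_t a).symm
    exact (Set.bijOn_id _).congr heq

lemma comp_witness {f g : A → A} (hf : ∀ a b, f (a * b) = f a * f b)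
    (hg : ∀ a b, g (a * b) = g a * g b) {e₁ e₂ : A}
    (hbf : Set.BijOn f (idealOf e₁) (idealOf (f 1)))
    (hbg : Set.BijOn g (idealOf e₂) (idealOf (g 1)))
    (hfe : f e₁ = f 1) (hge : g e₂ = g 1) :
    ∃ c : A, g (f c) = g (f 1) ∧
      Set.BijOn (fun a => g (f a)) (idealOf c) (idealOf (g (f 1))) := by
  have hu : f 1 * f 1 = f 1 := by rw [← hf, one_mul]
  have he₂ : e₂ * e₂ = e₂ := by
    apply hbg.injOn ⟨e₂, rfl⟩ (self_mem_idealOf e₂)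
    rw [hg, hge, ← hg, one_mul]
  obtain ⟨c, hc, hfc⟩ := hbf.surjOn (⟨e₂, rfl⟩ : e₂ * f 1 ∈ idealOf (f 1))
  have hfc : f c = e₂ * f 1 := hfc
  have hcc : c * c = c := by
    apply hbf.injOn (mul_mem_idealOf c hc) hc
    rw [hf, hfc]
    calc (e₂ * f 1) * (e₂ * f 1) = (e₂ * e₂) * (f 1 * f 1) := by ring
      _ = e₂ * f 1 := by rw [he₂, hu]
  have hgf1 : g (f c) = g (f 1) := by
    rw [hfc, hg, hge, ← hg, one_mul]
  have hsplit : ∀ a : A, g (f (a * c)) = (g (f (a * c)) * g e₂) * g (f 1) := by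
    intro a
    calc g (f (a * c)) = g (f (a * c * c)) := by rw [mul_assoc, hcc]
      _ = g (f (a * c) * f c) := by rw [← hf]
      _ = g (f (a * c)) * (g e₂ * g (f 1)) := by rw [hfc, hg, hg]
      _ = (g (f (a * c)) * g e₂) * g (f 1) := by ring
  have hf_mem : ∀ a : A, f (a * c) ∈ idealOf e₂ := by
    intro a
    refine ⟨f (a * c) * f 1, ?_⟩
    calc (f (a * c) * f 1) * e₂ = f (a * c) * (e₂ * f 1) := by ring
      _ = f (a * c) * f c := by rw [hfc]
      _ = f (a * c * c) := by rw [← hf]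
      _ = f (a * c) := by rw [mul_assoc, hcc]
  refine ⟨c, hgf1, ?_, ?_, ?_⟩
  · rintro x ⟨a, rfl⟩
    exact ⟨g (f (a * c)) * g e₂, (hsplit a).symm⟩
  · rintro x ⟨a, rfl⟩ y ⟨b, rfl⟩ hxy
    have h1 : f (a * c) = f (b * c) := hbg.injOn (hf_mem a) (hf_mem b) hxy
    exact hbf.injOn (mul_mem_idealOf a hc) (mul_mem_idealOf b hc) h1
  · rintro y ⟨a, rfl⟩
    have hmem_v : a * g (f 1) ∈ idealOf (g 1) := by
      refine ⟨a * g (f 1), ?_⟩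
      show (a * g (f 1)) * g 1 = a * g (f 1)
      rw [mul_assoc, ← hg, mul_one]
    obtain ⟨b, hb, hgb⟩ := hbg.surjOn hmem_v
    have hgb : g b = a * g (f 1) := hgb
    have hb2 : b = b * (e₂ * f 1) := by
      have hgfidem : g (f 1) * g (f 1) = g (f 1) := by rw [← hg, hu]
      have heq : g (b * (e₂ * f 1)) = g b := by
        rw [hg, hg, hge, hgb]
        calc (a * g (f 1)) * (g 1 * g (f 1))
            = (a * (g (f 1) * g (f 1))) * g 1 := by ring
          _ = (a * g (f 1)) * g 1 := by rw [hgfidem]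
          _ = a * (g (f 1) * g 1) := by ring
          _ = a * g (f 1) := by rw [← hg, mul_one]
      have hbmem' : b * (e₂ * f 1) ∈ idealOf e₂ := ⟨b * f 1, by ring⟩
      exact (hbg.injOn hbmem' hb heq).symm
    have hbu : b ∈ idealOf (f 1) := ⟨b * e₂, by
      show (b * e₂) * f 1 = b
      rw [mul_assoc, ← hb2]⟩
    obtain ⟨d, hd, hfd⟩ := hbf.surjOn hbu
    have hfd : f d = b := hfd
    refine ⟨d * c, ⟨d, rfl⟩, ?_⟩
    show g (f (d * c)) = a * g (f 1)
    rw [hf, hfd, hfc, ← hb2, hgb]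

lemma conv_biretraction (α β : H →ₗ[k] A) (hα : IsBiretraction D α)
    (hβ : IsBiretraction D β) : IsBiretraction D (brtConv D α β) := by
  obtain ⟨hαm, hαs, e₁, hw₁⟩ := hα
  obtain ⟨hβm, hβs, e₂, hw₂⟩ := hβ
  refine ⟨fun x y => ?_, fun a => ?_, ?_⟩
  · rw [conv_apply, conv_apply, conv_apply, Phi_mul D α hαm, hβm]
  · rw [conv_apply, conv_apply, Phi_s, Phi_one, hβm, hβs]
    have h1 : β (D.t (α 1)) * β 1 = β (D.t (α 1)) := by rw [← hβm, mul_one]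
    calc β (D.t (α 1)) * (a * β 1) = a * (β (D.t (α 1)) * β 1) := by ring
      _ = a * β (D.t (α 1)) := by rw [h1]
  · have hf : ∀ a b : A, α (D.t (a * b)) = α (D.t a) * α (D.t b) := by
      intro a b; rw [map_mul D.t, hαm]
    have hg : ∀ a b : A, β (D.t (a * b)) = β (D.t a) * β (D.t b) := by
      intro a b; rw [map_mul D.t, hβm]
    have hγt : ∀ a : A, brtConv D α β (D.t a) = β (D.t (α (D.t a))) := by
      intro a; rw [conv_apply, Phi_t]
    have ht1 : α (D.t (1:A)) = α 1 := by rw [map_one D.t]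
    have hβt1 : β (D.t (1:A)) = β 1 := by rw [map_one D.t]
    have hγ1 : brtConv D α β 1 = β (D.t (α (D.t (1:A)))) := by
      rw [conv_apply, Phi_one, ht1]
    have hfe : α (D.t e₁) = α (D.t (1:A)) := by rw [ht1]; exact hw₁.1
    have hbf : Set.BijOn (fun a => α (D.t a)) (idealOf e₁) (idealOf (α (D.t (1:A)))) := by
      rw [ht1]; exact hw₁.2
    have hge : β (D.t e₂) = β (D.t (1:A)) := by rw [hβt1]; exact hw₂.1
    have hbg : Set.BijOn (fun a => β (D.t a)) (idealOf e₂) (idealOf (β (D.t (1:A)))) := by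
      rw [hβt1]; exact hw₂.2
    obtain ⟨c, hc1, hc2⟩ := comp_witness hf hg hbf hbg hfe hge
    refine ⟨c, ?_, ?_⟩
    · rw [hγt, hγ1]; exact hc1
    · rw [show brtConv D α β 1 = β (D.t (α (D.t (1:A)))) from hγ1]
      have heq : Set.EqOn (fun a => β (D.t (α (D.t a))))
          (fun a => brtConv D α β (D.t a)) (idealOf c) := fun a _ => (hγt a).symm
      exact hc2.congr heq

end BrtAux
namespace BrtAux

variable {k A H : Type*} [CommRing k] [CommRing A] [CommRing H] [Algebra k A] [Algebra k H]
variable (D : CommHopfAlgebroid k A H)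

lemma star_all (α : H →ₗ[k] A) (hα : IsBiretraction D α) (e : A) (hw : IsBrtWitness D α e)
    (inv : A →ₗ[k] A) (hinv1 : ∀ x ∈ idealOf e, inv (α (D.t x)) = x)
    (hinv2 : ∀ y ∈ idealOf (α 1), α (D.t (inv y)) = y) :
    IsBiretraction D (inv ∘ₗ α ∘ₗ D.antipode.toLinearMap) ∧
    brtConv D (brtConv D α (inv ∘ₗ α ∘ₗ D.antipode.toLinearMap)) α = α ∧
    brtConv D (brtConv D (inv ∘ₗ α ∘ₗ D.antipode.toLinearMap) α)
        (inv ∘ₗ α ∘ₗ D.antipode.toLinearMap)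
      = inv ∘ₗ α ∘ₗ D.antipode.toLinearMap := by
  obtain ⟨hαm, hαs, _⟩ := hα
  set αs : H →ₗ[k] A := inv ∘ₗ α ∘ₗ D.antipode.toLinearMap with hαsdef
  have hstar_apply : ∀ h : H, αs h = inv (α (D.antipode h)) := fun h => rfl
  have habs : ∀ z : H, α z * α 1 = α z := fun z => by rw [← hαm, mul_one]
  have hu : α 1 * α 1 = α 1 := habs 1
  have hmemu : ∀ x : H, α x ∈ idealOf (α 1) := fun x => ⟨α x, habs x⟩
  have hte : α (D.t e) = α 1 := hw.1
  have hinv_mem : ∀ y ∈ idealOf (α 1), inv y ∈ idealOf e := by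
    intro y hy
    obtain ⟨x, hx, rfl⟩ := hw.2.2.2 hy
    show inv (α (D.t x)) ∈ idealOf e
    rw [hinv1 x hx]; exact hx
  have hinj := hw.2.2.1
  have habs' : ∀ a ∈ idealOf (α 1), a * α 1 = a := by
    rintro a ⟨b, rfl⟩; rw [mul_assoc, hu]
  have hmul_memu : ∀ y z : A, y ∈ idealOf (α 1) → y * z ∈ idealOf (α 1) := by
    rintro y z ⟨b, rfl⟩; exact ⟨b * z, by ring⟩
  have hinv_mul : ∀ y z : A, y ∈ idealOf (α 1) → z ∈ idealOf (α 1) →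
      inv (y * z) = inv y * inv z := by
    intro y z hy hz
    apply hinj (hinv_mem _ (hmul_memu y z hy)) (mul_mem_idealOf (inv y) (hinv_mem z hz))
    show α (D.t (inv (y * z))) = α (D.t (inv y * inv z))
    rw [hinv2 _ (hmul_memu y z hy), map_mul D.t, hαm, hinv2 _ hy, hinv2 _ hz]
  have hstar_mul : ∀ x y : H, αs (x * y) = αs x * αs y := by
    intro x y
    rw [hstar_apply, hstar_apply, hstar_apply, map_mul D.antipode, hαm,
      hinv_mul _ _ (hmemu _) (hmemu _)]
  have hinv_alpha1 : inv (α 1) = e := by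
    rw [← hte, hinv1 e (self_mem_idealOf e)]
  have hstar_one : αs 1 = e := by
    rw [hstar_apply, map_one D.antipode, hinv_alpha1]
  have hstar_t : ∀ a : A, αs (D.t a) = inv (a * α 1) := by
    intro a; rw [hstar_apply, D.antipode_t, hαs]
  have hstar_s : ∀ a : A, αs (D.s a) = a * αs 1 := by
    intro a
    rw [hstar_apply, D.antipode_s, hstar_one]
    have h1 : α (D.t a) = α (D.t (a * e)) := by
      rw [map_mul D.t, hαm, hte, habs]
    rw [h1, hinv1 (a * e) ⟨a, rfl⟩]
  have hbiret : IsBiretraction D αs := by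
    refine ⟨hstar_mul, hstar_s, α 1, ?_, ?_, ?_, ?_⟩
    · rw [hstar_t, hu, hinv_alpha1, hstar_one]
    · -- MapsTo
      intro a ha
      show αs (D.t a) ∈ idealOf (αs 1)
      rw [hstar_t, habs' a ha, hstar_one]
      exact hinv_mem a ha
    · -- InjOn
      intro x hx y hy hxy
      have h1 : inv x = inv y := by
        have e1 : αs (D.t x) = inv x := by rw [hstar_t, habs' x hx]
        have e2 : αs (D.t y) = inv y := by rw [hstar_t, habs' y hy]
        rw [← e1, ← e2]; exact hxy
      have := congrArg (fun z => α (D.t z)) h1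
      simpa [hinv2 x hx, hinv2 y hy] using this
    · -- SurjOn
      intro x hx
      rw [hstar_one] at hx
      refine ⟨α (D.t x), hmemu _, ?_⟩
      show αs (D.t (α (D.t x))) = x
      rw [hstar_t, habs, hinv1 x hx]
  -- (b)
  have hb : brtConv D (brtConv D α αs) α = α := by
    have key1 : ((α ∘ₗ D.antipode.toLinearMap) ∘ₗ psi D α : H ⊗[k] H →ₗ[k] A)
        = (LinearMap.mulLeft k (α 1)) ∘ₗ α ∘ₗ (LinearMap.mul' k H) ∘ₗ
            TensorProduct.map LinearMap.id D.antipode.toLinearMap := by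
      apply TensorProduct.ext'
      intro x y
      simp only [LinearMap.comp_apply, psi_tmul, TensorProduct.map_tmul,
        LinearMap.mul'_apply, LinearMap.id_apply, AlgHom.toLinearMap_apply,
        LinearMap.mulLeft_apply]
      rw [map_mul D.antipode, D.antipode_t, hαm, hαm, hαs]
      ring
    have b1 : ∀ h : H, brtConv D α αs h = inv (α (D.t (D.counit h))) := by
      intro h
      have h1 := LinearMap.congr_fun key1 (D.comul.toLinearMap h)
      simp only [LinearMap.comp_apply, LinearMap.mulLeft_apply] at h1
      have h2 := LinearMap.congr_fun D.antipode_right h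
      simp only [LinearMap.comp_apply] at h2
      calc brtConv D α αs h
          = inv (α (D.antipode (psi D α (D.comul.toLinearMap h)))) := rfl
        _ = inv (α 1 * α ((LinearMap.mul' k H)
            ((TensorProduct.map LinearMap.id D.antipode.toLinearMap)
              (D.comul.toLinearMap h)))) := by rw [← h1]; rfl
        _ = inv (α 1 * α (D.t.toLinearMap (D.counit.toLinearMap h))) := by rw [h2]
        _ = inv (α (D.t (D.counit h))) := by
              show inv (α 1 * α (D.t (D.counit h))) = _
              rw [mul_comm, habs]
    apply conv_eq_of_t_eq
    apply TensorProduct.ext'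
    intro x y
    simp only [LinearMap.comp_apply, psi_tmul]
    rw [hαm, hαm]
    congr 1
    rw [b1 x]
    have := hinv2 _ (hmemu (D.t (D.counit x)))
    rw [this]
    rfl
  -- (c)
  have c1 : ∀ x : H, brtConv D αs α x = D.counit x * α 1 := by
    have key3 : (α ∘ₗ psi D αs : H ⊗[k] H →ₗ[k] A)
        = α ∘ₗ (LinearMap.mul' k H) ∘ₗ
            TensorProduct.map D.antipode.toLinearMap LinearMap.id := by
      apply TensorProduct.ext'
      intro x y
      simp only [LinearMap.comp_apply, psi_tmul, TensorProduct.map_tmul,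
        LinearMap.mul'_apply, LinearMap.id_apply, AlgHom.toLinearMap_apply]
      rw [hαm, hαm, hstar_apply, hinv2 _ (hmemu _)]
    intro x
    have h1 := LinearMap.congr_fun key3 (D.comul.toLinearMap x)
    simp only [LinearMap.comp_apply] at h1
    have h2 := LinearMap.congr_fun D.antipode_left x
    simp only [LinearMap.comp_apply] at h2
    calc brtConv D αs α x = α (psi D αs (D.comul.toLinearMap x)) := rfl
      _ = α ((LinearMap.mul' k H)
          ((TensorProduct.map D.antipode.toLinearMap LinearMap.id)
            (D.comul.toLinearMap x))) := h1
      _ = α (D.s.toLinearMap (D.counit.toLinearMap x)) := by rw [h2]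
      _ = D.counit x * α 1 := hαs _
  have hc : brtConv D (brtConv D αs α) αs = αs := by
    apply conv_eq_of_t_eq
    apply TensorProduct.ext'
    intro x y
    simp only [LinearMap.comp_apply, psi_tmul]
    rw [hstar_mul, hstar_mul]
    congr 1
    rw [c1 x, hstar_t, hstar_t]
    show inv (D.counit x * α 1 * α 1) = inv (D.counit.toLinearMap x * α 1)
    rw [mul_assoc, hu]
    rfl
  exact ⟨hbiret, hb, hc⟩

end BrtAux

/-- **`Brt(H, A)` is a regular monoid.** For a commutative Hopf algebroid `H` over
`A`, the set of local biretractions is closed under the convolution product, the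
product is associative, the counit `ε` is a (two-sided) unit, and every local
biretraction `α` has a pseudo-inverse `α* = (α∘t)⁻¹ ∘ α ∘ S` with
`α ∗ α* ∗ α = α` and `α* ∗ α ∗ α* = α*`. -/
theorem Brt_is_regular_monoid (D : CommHopfAlgebroid k A H) :
    (∀ α β : H →ₗ[k] A, IsBiretraction D α → IsBiretraction D β →
      IsBiretraction D (brtConv D α β)) ∧
    (∀ α β γ : H →ₗ[k] A, IsBiretraction D α → IsBiretraction D β → IsBiretraction D γ →
      brtConv D (brtConv D α β) γ = brtConv D α (brtConv D β γ)) ∧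
    IsBiretraction D D.counit.toLinearMap ∧
    (∀ α : H →ₗ[k] A, IsBiretraction D α →
      brtConv D D.counit.toLinearMap α = α ∧ brtConv D α D.counit.toLinearMap = α) ∧
    (∀ α : H →ₗ[k] A, IsBiretraction D α → ∀ e : A, IsBrtWitness D α e →
      ∀ inv : A →ₗ[k] A,
        (∀ x ∈ idealOf e, inv (α (D.t x)) = x) →
        (∀ y ∈ idealOf (α 1), α (D.t (inv y)) = y) →
        IsBiretraction D (inv ∘ₗ α ∘ₗ D.antipode.toLinearMap) ∧
        brtConv D (brtConv D α (inv ∘ₗ α ∘ₗ D.antipode.toLinearMap)) α = α ∧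
        brtConv D (brtConv D (inv ∘ₗ α ∘ₗ D.antipode.toLinearMap) α)
            (inv ∘ₗ α ∘ₗ D.antipode.toLinearMap)
          = inv ∘ₗ α ∘ₗ D.antipode.toLinearMap) := by
  exact ⟨BrtAux.conv_biretraction D, fun α β γ _ _ _ => BrtAux.conv_assoc D α β γ,
    BrtAux.counit_biretraction D,
    fun α hα => ⟨BrtAux.counit_conv D α, BrtAux.conv_counit D α hα.1 hα.2.1⟩,
    fun α hα e hw inv h1 h2 => BrtAux.star_all D α hα e hw inv h1 h2⟩
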